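/- For any intuitionistic fuzzy submodule A of an R-module M, the radical of the radical equals the radical: √(√A) = √A, where the outer radical is taken in the ring R (i.e., √(√μ_A)(r) = sup_{n∈ℕ} √μ_A(rⁿ) and dually for ν). -/

import Mathlib

open scoped Classical

/-- An intuitionistic fuzzy submodule of an `R`-module `M`. -/
structure IFSub (R M : Type*) [CommRing R] [AddCommGroup M] [Module R M] where
  mu : M → ℝ
  nu : M → ℝ
  mu_nonneg : ∀ x, 0 ≤ mu x
  nu_nonneg : ∀ x, 0 ≤ nu x
  mu_le_one : ∀ x, mu x ≤ 1
  nu_le_one : ∀ x, nu x ≤ 1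
  sum_le_one : ∀ x, mu x + nu x ≤ 1
  mu_zero : mu 0 = 1
  nu_zero : nu 0 = 0
  mu_add : ∀ x y, min (mu x) (mu y) ≤ mu (x + y)
  nu_add : ∀ x y, nu (x + y) ≤ max (nu x) (nu y)
  mu_smul : ∀ (r : R) (x : M), mu x ≤ mu (r • x)
  nu_smul : ∀ (r : R) (x : M), nu (r • x) ≤ nu x

/-- Predicate version: `(mu, nu)` is an intuitionistic fuzzy submodule. -/
def IsIFSub (R : Type*) {M : Type*} [CommRing R] [AddCommGroup M] [Module R M]
    (mu nu : M → ℝ) : Prop :=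
  (∀ x, 0 ≤ mu x) ∧ (∀ x, 0 ≤ nu x) ∧ (∀ x, mu x ≤ 1) ∧ (∀ x, nu x ≤ 1) ∧
  (∀ x, mu x + nu x ≤ 1) ∧ mu 0 = 1 ∧ nu 0 = 0 ∧
  (∀ x y, min (mu x) (mu y) ≤ mu (x + y)) ∧
  (∀ x y, nu (x + y) ≤ max (nu x) (nu y)) ∧
  (∀ (r : R) (x : M), mu x ≤ mu (r • x)) ∧
  (∀ (r : R) (x : M), nu (r • x) ≤ nu x)

/-- `(mu, nu)` is an intuitionistic fuzzy ideal of the ring `R`. -/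
def IsIFIdeal {R : Type*} [CommRing R] (mu nu : R → ℝ) : Prop :=
  (∀ x y, min (mu x) (mu y) ≤ mu (x - y)) ∧
  (∀ x y, nu (x - y) ≤ max (nu x) (nu y)) ∧
  (∀ x y, max (mu x) (mu y) ≤ mu (x * y)) ∧
  (∀ x y, nu (x * y) ≤ min (nu x) (nu y))

/-- μ-part of the intuitionistic fuzzy radical of a fuzzy subset of a module
(`n` ranges over the positive naturals). -/
noncomputable def radmu {R M : Type*} [CommRing R] [AddCommGroup M] [Module R M]
    (mu : M → ℝ) (r : R) : ℝ :=
  ⨆ n : ℕ, ⨅ m : M, mu (r ^ (n + 1) • m)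

/-- ν-part of the intuitionistic fuzzy radical. -/
noncomputable def radnu {R M : Type*} [CommRing R] [AddCommGroup M] [Module R M]
    (nu : M → ℝ) (r : R) : ℝ :=
  ⨅ n : ℕ, ⨆ m : M, nu (r ^ (n + 1) • m)

/-- μ-part of the radical of a fuzzy subset of the ring `R`. -/
noncomputable def ringradmu {R : Type*} [CommRing R] (mu : R → ℝ) (r : R) : ℝ :=
  ⨆ n : ℕ, mu (r ^ (n + 1))

/-- ν-part of the radical of a fuzzy subset of the ring `R`. -/
noncomputable def ringradnu {R : Type*} [CommRing R] (nu : R → ℝ) (r : R) : ℝ :=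
  ⨅ n : ℕ, nu (r ^ (n + 1))

/-- μ-part of `Ā = (A : M)`. -/
noncomputable def barmu {R M : Type*} [CommRing R] [AddCommGroup M] [Module R M]
    (mu : M → ℝ) (r : R) : ℝ :=
  ⨅ m : M, mu (r • m)

/-- ν-part of `Ā = (A : M)`. -/
noncomputable def barnu {R M : Type*} [CommRing R] [AddCommGroup M] [Module R M]
    (nu : M → ℝ) (r : R) : ℝ :=
  ⨆ m : M, nu (r • m)

/-- μ-part of the sum of two intuitionistic fuzzy subsets. -/
noncomputable def summu {M : Type*} [AddCommGroup M] (f g : M → ℝ) (x : M) : ℝ :=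
  sSup {t : ℝ | ∃ y z : M, y + z = x ∧ t = min (f y) (g z)}

/-- ν-part of the sum of two intuitionistic fuzzy subsets. -/
noncomputable def sumnu {M : Type*} [AddCommGroup M] (f g : M → ℝ) (x : M) : ℝ :=
  sInf {t : ℝ | ∃ y z : M, y + z = x ∧ t = max (f y) (g z)}

/-- μ-part of the intuitionistic fuzzy characteristic function of a set. -/
noncomputable def chimu {X : Type*} (s : Set X) (x : X) : ℝ :=
  if x ∈ s then 1 else 0

/-- ν-part of the intuitionistic fuzzy characteristic function of a set. -/
noncomputable def chinu {X : Type*} (s : Set X) (x : X) : ℝ :=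
  if x ∈ s then 0 else 1

/-- The sup property: suprema of `mu` and infima of `nu` over nonempty subsets are attained. -/
def SupProp {X : Type*} (mu nu : X → ℝ) : Prop :=
  ∀ Y : Set X, Y.Nonempty →
    ∃ y₀ ∈ Y, (∀ y ∈ Y, mu y ≤ mu y₀) ∧ (∀ y ∈ Y, nu y₀ ≤ nu y)

/-- `(mu, nu)` is an intuitionistic fuzzy primary submodule. -/
def IsIFPrimary (R : Type*) {M : Type*} [CommRing R] [AddCommGroup M] [Module R M]
    (mu nu : M → ℝ) : Prop :=
  ∀ (r : R) (m : M),
    (mu (r • m) = mu m ∧ nu (r • m) = nu m) ∨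
    (mu (r • m) ≤ radmu mu r ∧ radnu nu r ≤ nu (r • m))

/-- μ-part of the image of a fuzzy subset under a map. -/
noncomputable def immu {M M' : Type*} (f : M → M') (mu : M → ℝ) (y : M') : ℝ :=
  sSup {t : ℝ | ∃ x : M, f x = y ∧ t = mu x}

/-- ν-part of the image of a fuzzy subset under a map. -/
noncomputable def imnu {M M' : Type*} (f : M → M') (nu : M → ℝ) (y : M') : ℝ :=
  sInf {t : ℝ | ∃ x : M, f x = y ∧ t = nu x}

/-- An intuitionistic fuzzy ideal of `R` (structure version, with `mu 0 = 1`, `nu 0 = 0`). -/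
structure IFIdealS (R : Type*) [CommRing R] where
  mu : R → ℝ
  nu : R → ℝ
  mu_nonneg : ∀ x, 0 ≤ mu x
  nu_nonneg : ∀ x, 0 ≤ nu x
  mu_le_one : ∀ x, mu x ≤ 1
  nu_le_one : ∀ x, nu x ≤ 1
  sum_le_one : ∀ x, mu x + nu x ≤ 1
  mu_zero : mu 0 = 1
  nu_zero : nu 0 = 0
  mu_sub : ∀ x y, min (mu x) (mu y) ≤ mu (x - y)
  nu_sub : ∀ x y, nu (x - y) ≤ max (nu x) (nu y)
  mu_mul : ∀ x y, max (mu x) (mu y) ≤ mu (x * y)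
  nu_mul : ∀ x y, nu (x * y) ≤ min (nu x) (nu y)

/-- `√(√A) = √A`, the outer radical taken in the ring `R`. -/
theorem stmt1 {R M : Type*} [CommRing R] [AddCommGroup M] [Module R M]
    (A : IFSub R M) (r : R) :
    ringradmu (radmu A.mu) r = radmu A.mu r ∧
    ringradnu (radnu A.nu) r = radnu A.nu r := by
  classical
  set g : ℕ → ℝ := fun n => ⨅ m : M, A.mu (r ^ (n + 1) • m) with hg
  set h : ℕ → ℝ := fun n => ⨆ m : M, A.nu (r ^ (n + 1) • m) with hh
  have gbdd : ∀ n, BddBelow (Set.range fun m : M => A.mu (r ^ (n + 1) • m)) := by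
    intro n
    exact ⟨0, by rintro _ ⟨m, rfl⟩; exact A.mu_nonneg _⟩
  have hbdd : ∀ n, BddAbove (Set.range fun m : M => A.nu (r ^ (n + 1) • m)) := by
    intro n
    exact ⟨1, by rintro _ ⟨m, rfl⟩; exact A.nu_le_one _⟩
  have g_le_one : ∀ n, g n ≤ 1 := fun n =>
    le_trans (ciInf_le (gbdd n) (0 : M)) (A.mu_le_one _)
  have h_nonneg : ∀ n, 0 ≤ h n := fun n =>
    le_trans (A.nu_nonneg _) (le_ciSup (hbdd n) (0 : M))
  have g_mono : Monotone g := by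
    apply monotone_nat_of_le_succ
    intro n
    refine le_ciInf fun m => ?_
    have : r ^ (n + 1 + 1) • m = r ^ (n + 1) • (r • m) := by
      rw [← smul_assoc, smul_eq_mul, ← pow_succ]
    rw [this]
    exact ciInf_le (gbdd n) (r • m)
  have h_anti : Antitone h := by
    apply antitone_nat_of_succ_le
    intro n
    refine ciSup_le fun m => ?_
    have : r ^ (n + 1 + 1) • m = r ^ (n + 1) • (r • m) := by
      rw [← smul_assoc, smul_eq_mul, ← pow_succ]
    rw [this]
    exact le_ciSup (hbdd n) (r • m)
  have gsbdd : BddAbove (Set.range g) := ⟨1, by rintro _ ⟨n, rfl⟩; exact g_le_one n⟩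
  have hsbdd : BddBelow (Set.range h) := ⟨0, by rintro _ ⟨n, rfl⟩; exact h_nonneg n⟩
  have key : ∀ n : ℕ, radmu A.mu (r ^ (n + 1)) = radmu A.mu r := by
    intro n
    have eqg : ∀ k : ℕ, (⨅ m : M, A.mu ((r ^ (n + 1)) ^ (k + 1) • m)) = g (n * k + n + k) := by
      intro k
      have : (r ^ (n + 1)) ^ (k + 1) = r ^ (n * k + n + k + 1) := by
        rw [← pow_mul]; ring_nf
      simp [this, hg]
    have : radmu A.mu (r ^ (n + 1)) = ⨆ k : ℕ, g (n * k + n + k) := by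
      unfold radmu
      exact iSup_congr eqg
    rw [this]
    show (⨆ k : ℕ, g (n * k + n + k)) = ⨆ k : ℕ, g k
    apply le_antisymm
    · exact ciSup_le fun k => le_ciSup gsbdd (n * k + n + k)
    · have bdd2 : BddAbove (Set.range fun j : ℕ => g (n * j + n + j)) :=
        ⟨1, by rintro _ ⟨j, rfl⟩; exact g_le_one _⟩
      refine ciSup_le fun k => ?_
      calc g k ≤ g (n * k + n + k) := g_mono (by nlinarith)
        _ ≤ _ := le_ciSup bdd2 k
  have keyn : ∀ n : ℕ, radnu A.nu (r ^ (n + 1)) = radnu A.nu r := by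
    intro n
    have eqh : ∀ k : ℕ, (⨆ m : M, A.nu ((r ^ (n + 1)) ^ (k + 1) • m)) = h (n * k + n + k) := by
      intro k
      have : (r ^ (n + 1)) ^ (k + 1) = r ^ (n * k + n + k + 1) := by
        rw [← pow_mul]; ring_nf
      simp [this, hh]
    have : radnu A.nu (r ^ (n + 1)) = ⨅ k : ℕ, h (n * k + n + k) := by
      unfold radnu
      exact iInf_congr eqh
    rw [this]
    show (⨅ k : ℕ, h (n * k + n + k)) = ⨅ k : ℕ, h k
    apply le_antisymm
    · refine le_ciInf fun k => ?_
      have bdd2 : BddBelow (Set.range fun j : ℕ => h (n * j + n + j)) :=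
        ⟨0, by rintro _ ⟨j, rfl⟩; exact h_nonneg _⟩
      calc (⨅ j : ℕ, h (n * j + n + j)) ≤ h (n * k + n + k) := ciInf_le bdd2 k
        _ ≤ h k := h_anti (by nlinarith)
    · exact le_ciInf fun k => ciInf_le hsbdd (n * k + n + k)
  constructor
  · calc ringradmu (radmu A.mu) r = ⨆ _ : ℕ, radmu A.mu r := iSup_congr key
      _ = radmu A.mu r := ciSup_const
  · calc ringradnu (radnu A.nu) r = ⨅ _ : ℕ, radnu A.nu r := iInf_congr keyn
      _ = radnu A.nu r := ciInf_const
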